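/- Let q ∈ [1,∞]. For every nonzero signal f : V → X, the uncertainty inequality ‖f‖_1 · ‖f̂‖_1 / (‖f‖_q · ‖f̂‖_q) ≥ 1 / (κ_q(U) · κ_q(U*)) holds. In particular, ‖f‖_1‖f̂‖_1 / (‖f‖_2‖f̂‖_2) ≥ 1. -/

import Mathlib

open Finset
open scoped ENNReal

/-- The `L^p` norm of a signal `f : Fin N → E` (sup-norm when `p = ∞`). -/
noncomputable def gsNorm {E : Type*} [NormedAddCommGroup E] {N : ℕ} (p : ℝ≥0∞)
    (f : Fin N → E) : ℝ :=
  if p = ∞ then ⨆ n, ‖f n‖ else (∑ n, ‖f n‖ ^ p.toReal) ^ (1 / p.toReal)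

/-- `u k` is the `k`-th column of a unitary matrix, i.e. the family of columns is
orthonormal for the standard inner product on `𝕂^N` (hence an orthonormal basis). -/
def OrthoBasis {𝕂 : Type*} [RCLike 𝕂] {N : ℕ} (u : Fin N → Fin N → 𝕂) : Prop :=
  ∀ k l : Fin N, ∑ n, (starRingEnd 𝕂) (u k n) * u l n = if k = l then (1 : 𝕂) else 0

/-- Graph Fourier transform: `f̂ k = ∑ n, conj (u k n) • f n`. -/
noncomputable def gft {𝕂 : Type*} [RCLike 𝕂] {X : Type*} [NormedAddCommGroup X]
    [NormedSpace 𝕂 X] {N : ℕ} (u : Fin N → Fin N → 𝕂) (f : Fin N → X) : Fin N → X :=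
  fun k => ∑ n, (starRingEnd 𝕂) (u k n) • f n

/-- `p`-coherence `κ_p(U)`: the maximum of the `ℓ^p` norms of the columns of `U`. -/
noncomputable def coh {𝕂 : Type*} [RCLike 𝕂] {N : ℕ} (p : ℝ≥0∞)
    (u : Fin N → Fin N → 𝕂) : ℝ :=
  ⨆ k, gsNorm p (u k)

/-- Mixed norm `‖U‖_{p,q}`: the `ℓ^q` norm of the vector of `ℓ^p` norms of the columns. -/
noncomputable def mixNorm {𝕂 : Type*} [RCLike 𝕂] {N : ℕ} (p q : ℝ≥0∞)
    (u : Fin N → Fin N → 𝕂) : ℝ :=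
  gsNorm q (fun k => gsNorm p (u k))

/-- Graph convolution of a scalar signal `α` with a signal `f`:
`(α*f)(n) = ∑ k, u k n • (α̂ k • f̂ k)`. -/
noncomputable def gconv {𝕂 : Type*} [RCLike 𝕂] {X : Type*} [NormedAddCommGroup X]
    [NormedSpace 𝕂 X] {N : ℕ} (u : Fin N → Fin N → 𝕂) (α : Fin N → 𝕂)
    (f : Fin N → X) : Fin N → X :=
  fun n => ∑ k, u k n • (gft u α k • gft u f k)

/-- Graph translation operator `T_m f (n) = ∑ k, (u k n * conj (u k m)) • f̂ k`. -/
noncomputable def gtrans {𝕂 : Type*} [RCLike 𝕂] {X : Type*} [NormedAddCommGroup X]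
    [NormedSpace 𝕂 X] {N : ℕ} (u : Fin N → Fin N → 𝕂) (m : Fin N)
    (f : Fin N → X) : Fin N → X :=
  fun n => ∑ k, (u k n * (starRingEnd 𝕂) (u k m)) • gft u f k

section Helpers
open Matrix

variable {𝕂 : Type*} [RCLike 𝕂] {E : Type*} [NormedAddCommGroup E]
  {F : Type*} [NormedAddCommGroup F] {N : ℕ}

lemma gsNorm_congr' (p : ℝ≥0∞) (f : Fin N → E) (g : Fin N → F)
    (h : ∀ n, ‖f n‖ = ‖g n‖) : gsNorm p f = gsNorm p g := by
  unfold gsNorm; simp only [h]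

lemma gsNorm_eq_norm' (p : ℝ≥0∞) (hp : 1 ≤ p) (f : Fin N → E) :
    gsNorm p f = ‖(WithLp.equiv p (Fin N → ℝ)).symm (fun n => ‖f n‖)‖ := by
  haveI : Fact (1 ≤ p) := ⟨hp⟩
  rcases eq_or_ne p ∞ with h | h
  · subst h
    rw [gsNorm, if_pos rfl, PiLp.norm_eq_ciSup]
    simp [Real.norm_of_nonneg (norm_nonneg _)]
  · rw [gsNorm, if_neg h, PiLp.norm_eq_sum (ENNReal.toReal_pos (zero_lt_one.trans_le hp).ne' h)]
    simp [Real.norm_of_nonneg (norm_nonneg _)]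

lemma gsNorm_one' (f : Fin N → E) : gsNorm 1 f = ∑ n, ‖f n‖ := by
  rw [gsNorm, if_neg ENNReal.one_ne_top]
  simp

lemma gsNorm_mono' (p : ℝ≥0∞) (f : Fin N → E) (g : Fin N → ℝ)
    (h : ∀ n, ‖f n‖ ≤ g n) : gsNorm p f ≤ gsNorm p g := by
  have h' : ∀ n, ‖f n‖ ≤ ‖g n‖ := fun n => (h n).trans (le_abs_self _)
  unfold gsNorm
  split
  · exact ciSup_mono (Set.Finite.bddAbove (Set.finite_range _)) h'
  · refine Real.rpow_le_rpow (by positivity) ?_ (by positivity)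
    exact Finset.sum_le_sum fun n _ =>
      Real.rpow_le_rpow (norm_nonneg _) (h' n) ENNReal.toReal_nonneg

lemma gsNorm_nonneg' (p : ℝ≥0∞) (f : Fin N → E) : 0 ≤ gsNorm p f := by
  unfold gsNorm
  split
  · exact Real.iSup_nonneg fun n => norm_nonneg _
  · positivity

lemma gsNorm_pos' (hN : 0 < N) (p : ℝ≥0∞) (f : Fin N → E) (hf : f ≠ 0) :
    0 < gsNorm p f := by
  haveI : Nonempty (Fin N) := ⟨⟨0, hN⟩⟩
  obtain ⟨n, hn⟩ : ∃ n, f n ≠ 0 := by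
    by_contra h; push_neg at h; exact hf (funext h)
  have hpos : 0 < ‖f n‖ := norm_pos_iff.mpr hn
  unfold gsNorm
  split
  · exact hpos.trans_le (le_ciSup (f := fun m => ‖f m‖) (Set.Finite.bddAbove (Set.finite_range _)) n)
  · have hs : (0:ℝ) < ∑ m, ‖f m‖ ^ p.toReal := by
      refine Finset.sum_pos' (fun m _ => Real.rpow_nonneg (norm_nonneg _) _) ?_
      exact ⟨n, Finset.mem_univ n, Real.rpow_pos_of_pos hpos _⟩
    exact Real.rpow_pos_of_pos hs _

lemma key_bound' {X : Type*} [NormedAddCommGroup X] [NormedSpace 𝕂 X]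
    (hN : 0 < N) (q : ℝ≥0∞) (hq : 1 ≤ q)
    (a : Fin N → Fin N → 𝕂) (f : Fin N → X) :
    gsNorm q (fun k => ∑ n, a k n • f n) ≤
      (⨆ n, gsNorm q (fun k => a k n)) * gsNorm 1 f := by
  haveI : Nonempty (Fin N) := ⟨⟨0, hN⟩⟩
  haveI : Fact (1 ≤ q) := ⟨hq⟩
  set A : Fin N → PiLp q (fun _ : Fin N => ℝ) :=
    fun n => (WithLp.equiv q (Fin N → ℝ)).symm (fun k => ‖a k n‖) with hA
  have step1 : gsNorm q (fun k => ∑ n, a k n • f n) ≤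
      gsNorm q (fun k => ∑ n, ‖f n‖ * ‖a k n‖) := by
    refine gsNorm_mono' q _ _ fun k => ?_
    calc ‖∑ n, a k n • f n‖ ≤ ∑ n, ‖a k n • f n‖ := norm_sum_le _ _
      _ = ∑ n, ‖f n‖ * ‖a k n‖ := by simp [norm_smul, mul_comm]
  have step2 : gsNorm q (fun k => ∑ n, ‖f n‖ * ‖a k n‖) = ‖∑ n, ‖f n‖ • A n‖ := by
    rw [gsNorm_eq_norm' q hq]
    congr 1
    ext k
    rw [WithLp.equiv_symm_apply, PiLp.toLp_apply, Real.norm_of_nonneg (by positivity),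
      WithLp.ofLp_sum, Finset.sum_apply k Finset.univ (fun n => WithLp.ofLp (‖f n‖ • A n))]
    simp [hA]
  have hAn : ∀ n, ‖A n‖ = gsNorm q (fun k => a k n) := fun n =>
    (gsNorm_eq_norm' q hq _).symm
  have step3 : ‖∑ n, ‖f n‖ • A n‖ ≤ ∑ n, ‖f n‖ * gsNorm q (fun k => a k n) := by
    calc ‖∑ n, ‖f n‖ • A n‖ ≤ ∑ n, ‖‖f n‖ • A n‖ := norm_sum_le _ _
      _ = ∑ n, ‖f n‖ * gsNorm q (fun k => a k n) := by
          refine Finset.sum_congr rfl fun n _ => ?_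
          rw [norm_smul, Real.norm_of_nonneg (norm_nonneg _), hAn]
  have step4 : ∑ n, ‖f n‖ * gsNorm q (fun k => a k n) ≤
      (⨆ n, gsNorm q (fun k => a k n)) * gsNorm 1 f := by
    rw [gsNorm_one', Finset.mul_sum]
    refine Finset.sum_le_sum fun n _ => ?_
    rw [mul_comm ((⨆ n, gsNorm q (fun k => a k n))) _]
    exact mul_le_mul_of_nonneg_left
      (le_ciSup (f := fun n => gsNorm q (fun k => a k n))
        (Set.Finite.bddAbove (Set.finite_range _)) n) (norm_nonneg _)
  calc gsNorm q (fun k => ∑ n, a k n • f n)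
      ≤ gsNorm q (fun k => ∑ n, ‖f n‖ * ‖a k n‖) := step1
    _ = ‖∑ n, ‖f n‖ • A n‖ := step2
    _ ≤ ∑ n, ‖f n‖ * gsNorm q (fun k => a k n) := step3
    _ ≤ _ := step4

lemma rows_ortho' (u : Fin N → Fin N → 𝕂) (hU : OrthoBasis u) (n m : Fin N) :
    ∑ k, u k n * (starRingEnd 𝕂) (u k m) = if n = m then (1:𝕂) else 0 := by
  classical
  set M : Matrix (Fin N) (Fin N) 𝕂 := Matrix.of u with hM
  have key : ∀ k l, ∑ i, u k i * (starRingEnd 𝕂) (u l i) = if k = l then (1:𝕂) else 0 := by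
    intro k l
    have h := congrArg (starRingEnd 𝕂) (hU k l)
    rw [map_sum, apply_ite (starRingEnd 𝕂), _root_.map_one, _root_.map_zero] at h
    simpa [_root_.map_mul, mul_comm, RCLike.conj_conj] using h
  have h1 : M * Mᴴ = 1 := by
    ext k l
    rw [Matrix.mul_apply]
    simp only [Matrix.conjTranspose_apply, hM, Matrix.of_apply, Matrix.one_apply,
      RCLike.star_def]
    exact key k l
  have h2 : Mᴴ * M = 1 := mul_eq_one_comm.mp h1
  have h := congrFun (congrFun h2 n) m
  rw [Matrix.mul_apply] at h
  simp only [Matrix.conjTranspose_apply, hM, Matrix.of_apply, Matrix.one_apply,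
    RCLike.star_def] at h
  have h' := congrArg (starRingEnd 𝕂) h
  rw [map_sum, apply_ite (starRingEnd 𝕂), _root_.map_one, _root_.map_zero] at h'
  simpa [_root_.map_mul, mul_comm, RCLike.conj_conj] using h'

lemma gft_inversion' {X : Type*} [NormedAddCommGroup X] [NormedSpace 𝕂 X]
    (u : Fin N → Fin N → 𝕂) (hU : OrthoBasis u) (f : Fin N → X) (n : Fin N) :
    ∑ k, u k n • gft u f k = f n := by
  calc ∑ k, u k n • gft u f k
      = ∑ k, ∑ m, (u k n * (starRingEnd 𝕂) (u k m)) • f m := by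
        simp [gft, Finset.smul_sum, smul_smul]
    _ = ∑ m, (∑ k, u k n * (starRingEnd 𝕂) (u k m)) • f m := by
        rw [Finset.sum_comm]
        simp [Finset.sum_smul]
    _ = f n := by
        simp only [rows_ortho' u hU, ite_smul, one_smul, zero_smul]
        simp

lemma gsNorm_two_eq_one' (v : Fin N → 𝕂) (hv : ∑ n, ‖v n‖ ^ 2 = (1:ℝ)) :
    gsNorm 2 v = 1 := by
  rw [gsNorm, if_neg (by simp)]
  have h2 : (2:ℝ≥0∞).toReal = 2 := by simp
  rw [h2]
  have hs : ∑ n, ‖v n‖ ^ (2:ℝ) = 1 := by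
    rw [← hv]
    refine Finset.sum_congr rfl fun n _ => ?_
    rw [← Real.rpow_natCast (‖v n‖) 2]
    norm_num
  rw [hs, Real.one_rpow]

lemma main_ineq' {X : Type*} [NormedAddCommGroup X] [NormedSpace 𝕂 X]
    (hN : 0 < N) (u : Fin N → Fin N → 𝕂) (hU : OrthoBasis u)
    (q : ℝ≥0∞) (hq : 1 ≤ q) (f : Fin N → X) (hf : f ≠ 0) :
    (gsNorm 1 f * gsNorm 1 (gft u f)) / (gsNorm q f * gsNorm q (gft u f)) ≥
      1 / (coh q u * coh q (fun n k => u k n)) := by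
  haveI : Nonempty (Fin N) := ⟨⟨0, hN⟩⟩
  set k0 : Fin N := ⟨0, hN⟩
  -- f̂ ≠ 0
  have hfhat : gft u f ≠ 0 := by
    intro h
    apply hf
    funext n
    have := gft_inversion' u hU f n
    rw [h] at this
    simpa using this.symm
  -- bound on ‖f̂‖_q
  have hb1 : gsNorm q (gft u f) ≤ coh q (fun n k => u k n) * gsNorm 1 f := by
    have h := key_bound' hN q hq (fun k n => (starRingEnd 𝕂) (u k n)) f
    have e1 : ∀ n : Fin N, gsNorm q (fun k => (starRingEnd 𝕂) (u k n)) =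
        gsNorm q (fun k => u k n) := fun n =>
      gsNorm_congr' q _ _ fun k => RCLike.norm_conj _
    have e2 : (⨆ n, gsNorm q (fun k => (starRingEnd 𝕂) (u k n))) =
        coh q (fun n k => u k n) := by
      rw [coh]
      exact iSup_congr e1
    calc gsNorm q (gft u f) = gsNorm q (fun k => ∑ n, (starRingEnd 𝕂) (u k n) • f n) := rfl
      _ ≤ _ := h
      _ = coh q (fun n k => u k n) * gsNorm 1 f := by rw [e2]
  -- bound on ‖f‖_q
  have hb2 : gsNorm q f ≤ coh q u * gsNorm 1 (gft u f) := by
    have h := key_bound' hN q hq (fun n k => u k n) (gft u f)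
    have e : f = fun n => ∑ k, u k n • gft u f k := by
      funext n; rw [gft_inversion' u hU f n]
    calc gsNorm q f = gsNorm q (fun n => ∑ k, u k n • gft u f k) := by rw [← e]
      _ ≤ (⨆ k, gsNorm q (fun n => u k n)) * gsNorm 1 (gft u f) := h
      _ = coh q u * gsNorm 1 (gft u f) := by rw [coh]
  -- positivity of coherences
  have hcol : u k0 ≠ 0 := by
    intro h
    have := hU k0 k0
    rw [h] at this
    simp at this
  have hrow : (fun k => u k k0) ≠ 0 := by
    intro h
    have := rows_ortho' u hU k0 k0
    have hz : ∀ k, u k k0 = 0 := fun k => congrFun h k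
    simp [hz] at this
  have hC : 0 < coh q u :=
    lt_of_lt_of_le (gsNorm_pos' hN q (u k0) hcol)
      (le_ciSup (f := fun k => gsNorm q (u k))
        (Set.Finite.bddAbove (Set.finite_range _)) k0)
  have hC' : 0 < coh q (fun n k => u k n) :=
    lt_of_lt_of_le (gsNorm_pos' hN q (fun k => u k k0) hrow)
      (le_ciSup (f := fun n => gsNorm q (fun k => u k n))
        (Set.Finite.bddAbove (Set.finite_range _)) k0)
  have hPq : 0 < gsNorm q f := gsNorm_pos' hN q f hf
  have hPq' : 0 < gsNorm q (gft u f) := gsNorm_pos' hN q (gft u f) hfhat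
  rw [ge_iff_le, div_le_div_iff₀ (by positivity) (by positivity), one_mul]
  calc gsNorm q f * gsNorm q (gft u f)
      ≤ (coh q u * gsNorm 1 (gft u f)) * (coh q (fun n k => u k n) * gsNorm 1 f) :=
        mul_le_mul hb2 hb1 hPq'.le (mul_nonneg hC.le (gsNorm_nonneg' 1 (gft u f)))
    _ = gsNorm 1 f * gsNorm 1 (gft u f) * (coh q u * coh q (fun n k => u k n)) := by ring

end Helpers

/-- uncertainty principle
`‖f‖_1‖f̂‖_1 / (‖f‖_q‖f̂‖_q) ≥ 1/(κ_q(U)·κ_q(U*))`, with the particular case `q = 2`. -/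
theorem gft_uncertainty_two {𝕂 : Type*} [RCLike 𝕂] {X : Type*} [NormedAddCommGroup X]
    [NormedSpace 𝕂 X] [CompleteSpace X] {N : ℕ} (hN : 0 < N)
    (u : Fin N → Fin N → 𝕂) (hU : OrthoBasis u)
    (q : ℝ≥0∞) (hq : 1 ≤ q) :
    ∀ f : Fin N → X, f ≠ 0 →
      ((gsNorm 1 f * gsNorm 1 (gft u f)) / (gsNorm q f * gsNorm q (gft u f)) ≥
        1 / (coh q u * coh q (fun n k => u k n))) ∧
      ((gsNorm 1 f * gsNorm 1 (gft u f)) / (gsNorm 2 f * gsNorm 2 (gft u f)) ≥ 1) := by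
  intro f hf
  haveI : Nonempty (Fin N) := ⟨⟨0, hN⟩⟩
  refine ⟨main_ineq' hN u hU q hq f hf, ?_⟩
  have h2 := main_ineq' hN u hU 2 one_le_two f hf
  have hcol2 : coh 2 u = 1 := by
    rw [coh]
    have : ∀ k, gsNorm 2 (u k) = 1 := by
      intro k
      refine gsNorm_two_eq_one' _ ?_
      have h := hU k k
      simp only [if_pos rfl, RCLike.conj_mul] at h
      have hc : ((∑ n, ‖u k n‖ ^ 2 : ℝ) : 𝕂) = ((1:ℝ) : 𝕂) := by
        push_cast
        simpa using h
      exact_mod_cast hc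
    simp only [this]
    exact ciSup_const
  have hrow2 : coh 2 (fun n k => u k n) = 1 := by
    rw [coh]
    have : ∀ n, gsNorm 2 (fun k => u k n) = 1 := by
      intro n
      refine gsNorm_two_eq_one' _ ?_
      have h := rows_ortho' u hU n n
      simp only [if_pos rfl, RCLike.mul_conj] at h
      have hc : ((∑ k, ‖u k n‖ ^ 2 : ℝ) : 𝕂) = ((1:ℝ) : 𝕂) := by
        push_cast
        simpa using h
      exact_mod_cast hc
    simp only [this]
    exact ciSup_const
  rw [hcol2, hrow2] at h2
  simpa using h2
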